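/- Let S = K[x_1,…,x_n] be a standard graded polynomial ring over a field K of prime characteristic p, let I ⊆ S be a proper nonzero graded ideal minimally generated by homogeneous elements g_1,…,g_m, and let q = p^e > 1. Then there exists a homogeneous element f ∈ S with f ∈ (I^{[q]} : I), f ∉ I^{[q]}, and deg f ≤ (q−1)·(deg g_1 + … + deg g_m); in particular α_q(I) ≤ (q−1)·Σ_{i=1}^m deg g_i. -/
import Mathlib


open MvPolynomial

attribute [local instance] MvPolynomial.gradedAlgebra

noncomputable section

variable {K : Type*} [Field K] {n : ℕ}

/-- The `q`-th Frobenius power `I^{[q]}` of an ideal. -/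
def frobPow (I : Ideal (MvPolynomial (Fin n) K)) (q : ℕ) : Ideal (MvPolynomial (Fin n) K) :=
  Ideal.span ((fun a => a ^ q) '' (I : Set (MvPolynomial (Fin n) K)))

/-- The associated primes of `S/I`. -/
def Ass (I : Ideal (MvPolynomial (Fin n) K)) : Set (Ideal (MvPolynomial (Fin n) K)) :=
  associatedPrimes (MvPolynomial (Fin n) K) (MvPolynomial (Fin n) K ⧸ I)

/-- The v-number of a graded ideal. -/
def vnum (I : Ideal (MvPolynomial (Fin n) K)) : ℕ :=
  sInf {d : ℕ | ∃ f : MvPolynomial (Fin n) K, f.IsHomogeneous d ∧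
    ∃ 𝔭 ∈ Ass I, I.colon (Ideal.span {f}) = 𝔭}

/-- The local v-number `v_𝔭(I)`. -/
def vnumLocal (I 𝔭 : Ideal (MvPolynomial (Fin n) K)) : ℕ :=
  sInf {d : ℕ | ∃ f : MvPolynomial (Fin n) K, f.IsHomogeneous d ∧
    I.colon (Ideal.span {f}) = 𝔭}

/-- The invariant `α_q(I)`. -/
def alphaq (I : Ideal (MvPolynomial (Fin n) K)) (q : ℕ) : ℕ :=
  sInf {d : ℕ | ∃ f : MvPolynomial (Fin n) K, f.IsHomogeneous d ∧
    f ∈ (frobPow I q).colon I ∧ f ∉ frobPow I q}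

/-- The height of an ideal: the minimal height of an associated prime. -/
def heightI (I : Ideal (MvPolynomial (Fin n) K)) : ℕ :=
  sInf {h : ℕ | ∃ 𝔭 ∈ Ass I, ∃ h𝔭 : 𝔭.IsPrime,
    Order.height (⟨𝔭, h𝔭⟩ : PrimeSpectrum (MvPolynomial (Fin n) K)) = (h : ℕ∞)}

/-- The big height of an ideal: the maximal height of an associated prime. -/
def bightI (I : Ideal (MvPolynomial (Fin n) K)) : ℕ :=
  sSup {h : ℕ | ∃ 𝔭 ∈ Ass I, ∃ h𝔭 : 𝔭.IsPrime,
    Order.height (⟨𝔭, h𝔭⟩ : PrimeSpectrum (MvPolynomial (Fin n) K)) = (h : ℕ∞)}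

/-- A graded (homogeneous) ideal with respect to the standard grading. -/
def IsGraded (I : Ideal (MvPolynomial (Fin n) K)) : Prop :=
  Ideal.IsHomogeneous (homogeneousSubmodule (Fin n) K) I

/-- A monomial ideal. -/
def IsMonomialIdeal (I : Ideal (MvPolynomial (Fin n) K)) : Prop :=
  ∃ s : Set (Fin n →₀ ℕ), I = Ideal.span ((fun a => monomial a (1 : K)) '' s)

theorem stmt5 {K : Type*} [Field K] {n : ℕ} (p : ℕ) (hp : p.Prime) [CharP K p]
    (q : ℕ) (hq : ∃ e : ℕ, q = p ^ e) (hq1 : 1 < q)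
    (I : Ideal (MvPolynomial (Fin n) K)) (hgr : IsGraded I) (htop : I ≠ ⊤) (hbot : I ≠ ⊥)
    (m : ℕ) (g : Fin m → MvPolynomial (Fin n) K) (dg : Fin m → ℕ)
    (hg : ∀ i, (g i).IsHomogeneous (dg i))
    (hspan : I = Ideal.span (Set.range g))
    (hmin : ∀ s : Set (MvPolynomial (Fin n) K), s ⊂ Set.range g → Ideal.span s ≠ I) :
    (∃ (f : MvPolynomial (Fin n) K) (df : ℕ), f.IsHomogeneous df ∧
      f ∈ (frobPow I q).colon I ∧ f ∉ frobPow I q ∧ df ≤ (q - 1) * ∑ i, dg i) ∧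
    alphaq I q ≤ (q - 1) * ∑ i, dg i := by
  classical
  -- frobPow I q ≤ I
  have hFle : frobPow I q ≤ I := by
    rw [frobPow]
    refine Ideal.span_le.mpr ?_
    rintro _ ⟨a, ha, rfl⟩
    show a ^ q ∈ I
    have h1 : (a : MvPolynomial (Fin n) K) ^ q = a ^ (q - 1) * a := by
      rw [← pow_succ]; congr 1; omega
    rw [h1]
    exact I.mul_mem_left _ ha
  have hone : (1 : MvPolynomial (Fin n) K) ∉ frobPow I q := by
    intro h
    exact htop ((Ideal.eq_top_iff_one I).mpr (hFle h))
  set A : Set (Fin m → ℕ) :=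
    {c | (∀ i, c i ≤ q - 1) ∧ (∏ i, g i ^ c i) ∉ frobPow I q} with hA
  have h0A : (fun _ => 0) ∈ A := by
    constructor
    · intro i; exact Nat.zero_le _
    · simpa using hone
  set B : Set ℕ := (fun c : Fin m → ℕ => ∑ i, c i) '' A with hB
  have hBne : B.Nonempty := ⟨_, _, h0A, rfl⟩
  have hBbdd : BddAbove B := by
    refine ⟨(q - 1) * m, ?_⟩
    rintro _ ⟨c, hc, rfl⟩
    calc ∑ i, c i ≤ ∑ _i : Fin m, (q - 1) := Finset.sum_le_sum fun i _ => hc.1 i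
      _ = (q - 1) * m := by simp [Finset.sum_const, mul_comm]
  obtain ⟨c, hcA, hcs⟩ := Nat.sSup_mem hBne hBbdd
  set f : MvPolynomial (Fin n) K := ∏ i, g i ^ c i with hf
  -- key: f * g j ∈ frobPow I q for all j
  have hgI : ∀ j, g j ∈ I := by
    intro j; rw [hspan]; exact Ideal.subset_span ⟨j, rfl⟩
  have hkey : ∀ j, f * g j ∈ frobPow I q := by
    intro j
    by_cases hcj : c j = q - 1
    · have hsplit : f * g j = (∏ i ∈ Finset.univ.erase j, g i ^ c i) * g j ^ q := by
        rw [hf, ← Finset.prod_erase_mul Finset.univ (fun i => g i ^ c i) (Finset.mem_univ j), hcj, mul_assoc, ← pow_succ]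
        congr 2
        exact Nat.sub_add_cancel (le_of_lt hq1)
      rw [hsplit]
      exact Ideal.mul_mem_left _ _ (Ideal.subset_span ⟨g j, hgI j, rfl⟩)
    · by_contra hne
      -- bump c at j
      set c' : Fin m → ℕ := Function.update c j (c j + 1) with hc'
      have hprod : (∏ i, g i ^ c' i) = f * g j := by
        rw [hf, ← Finset.prod_erase_mul Finset.univ (fun i => g i ^ c' i) (Finset.mem_univ j),
            ← Finset.prod_erase_mul Finset.univ (fun i => g i ^ c i) (Finset.mem_univ j)]
        have he : (∏ i ∈ Finset.univ.erase j, g i ^ c' i)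
            = ∏ i ∈ Finset.univ.erase j, g i ^ c i := by
          refine Finset.prod_congr rfl fun i hi => ?_
          rw [hc', Function.update_of_ne (Finset.ne_of_mem_erase hi)]
        rw [he, hc', Function.update_self, pow_succ, mul_assoc]
      have hc'A : c' ∈ A := by
        constructor
        · intro i
          by_cases hij : i = j
          · subst hij
            rw [hc', Function.update_self]
            exact Nat.succ_le_of_lt ((hcA.1 _).lt_of_ne hcj)
          · rw [hc', Function.update_of_ne hij]
            exact hcA.1 i
        · rw [hprod]; exact hne
      have hmem : (∑ i, c' i) ∈ B := ⟨c', hc'A, rfl⟩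
      have hsum : (∑ i, c' i) = (∑ i, c i) + 1 := by
        rw [← Finset.sum_erase_add Finset.univ c' (Finset.mem_univ j),
            ← Finset.sum_erase_add Finset.univ c (Finset.mem_univ j)]
        have he : (∑ i ∈ Finset.univ.erase j, c' i) = ∑ i ∈ Finset.univ.erase j, c i :=
          Finset.sum_congr rfl fun i hi => by
            rw [hc', Function.update_of_ne (Finset.ne_of_mem_erase hi)]
        rw [he, hc', Function.update_self]
        exact (add_assoc _ _ _).symm
      have hle := le_csSup hBbdd hmem
      rw [hsum, ← hcs] at hle
      exact Nat.not_succ_le_self _ hle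
  have hfnot : f ∉ frobPow I q := hcA.2
  have hcolon : f ∈ (frobPow I q).colon I := by
    rw [Submodule.mem_colon]
    intro a ha
    rw [smul_eq_mul]
    rw [hspan] at ha
    induction ha using Submodule.span_induction with
    | mem x hx =>
        obtain ⟨j, rfl⟩ := hx
        exact hkey j
    | zero => simp
    | add x y _ _ hx hy => rw [mul_add]; exact Ideal.add_mem _ hx hy
    | smul r x _ hx =>
        rw [smul_eq_mul, mul_comm r x, ← mul_assoc]
        exact Ideal.mul_mem_right _ _ hx
  have hfh : f.IsHomogeneous (∑ i, dg i * c i) :=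
    MvPolynomial.IsHomogeneous.prod _ _ _ fun i _ => (hg i).pow (c i)
  have hdeg : (∑ i, dg i * c i) ≤ (q - 1) * ∑ i, dg i := by
    calc (∑ i, dg i * c i) ≤ ∑ i, dg i * (q - 1) :=
          Finset.sum_le_sum fun i _ => Nat.mul_le_mul_left _ (hcA.1 i)
      _ = (q - 1) * ∑ i, dg i := by rw [← Finset.sum_mul, mul_comm]
  refine ⟨⟨f, ∑ i, dg i * c i, hfh, hcolon, hfnot, hdeg⟩, ?_⟩
  exact le_trans (Nat.sInf_le ⟨f, hfh, hcolon, hfnot⟩) hdeg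


end
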